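/- Let L/K be a finite field extension in characteristic p > 0 and n = [L:K]. Then D(L/K) = End_K(L) if and only if the extension L/K is purely inseparable. -/

import Mathlib

/-- The filtration of Grothendieck differential operators on the `K`-algebra `L`:
`D_0` is the set of multiplication operators and
`D_{i+1} = {δ : [δ, l·] ∈ D_i for all l ∈ L}`. -/
def diffOpFil (K L : Type*) [Field K] [Field L] [Algebra K L] :
    ℕ → Set (Module.End K L)
  | 0 => Set.range ⇑(Algebra.lmul K L)
  | n + 1 =>
      {δ | ∀ l : L, δ * Algebra.lmul K L l - Algebra.lmul K L l * δ ∈ diffOpFil K L n}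

/-- The algebra `D(L/K)` of Grothendieck differential operators on `L` over `K`,
as a subset of `End_K(L)`: the union of the filtration `diffOpFil`. -/
def diffOps (K L : Type*) [Field K] [Field L] [Algebra K L] : Set (Module.End K L) :=
  ⋃ n, diffOpFil K L n

section Aux

variable (K L : Type*) [Field K] [Field L] [Algebra K L]

open LinearMap Polynomial

local notation "lm" => Algebra.lmul K L

lemma fil_zero_mem : ∀ n, (0 : Module.End K L) ∈ diffOpFil K L n := by
  intro n
  induction n with
  | zero => exact ⟨0, map_zero _⟩
  | succ n ih => intro l; simpa using ih

lemma fil_add_mem : ∀ n, ∀ {a b : Module.End K L},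
    a ∈ diffOpFil K L n → b ∈ diffOpFil K L n → a + b ∈ diffOpFil K L n := by
  intro n
  induction n with
  | zero => rintro _ _ ⟨x, rfl⟩ ⟨y, rfl⟩; exact ⟨x + y, map_add _ _ _⟩
  | succ n ih =>
    intro a b ha hb l
    have key : (a + b) * lm l - lm l * (a + b)
        = (a * lm l - lm l * a) + (b * lm l - lm l * b) := by noncomm_ring
    rw [key]
    exact ih (ha l) (hb l)

lemma fil_smul_mem : ∀ n, ∀ (c : K), ∀ {a : Module.End K L},
    a ∈ diffOpFil K L n → c • a ∈ diffOpFil K L n := by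
  intro n
  induction n with
  | zero =>
    rintro c _ ⟨x, rfl⟩
    exact ⟨c • x, by simp⟩
  | succ n ih =>
    intro c a ha l
    have key : (c • a) * lm l - lm l * (c • a) = c • (a * lm l - lm l * a) := by
      rw [smul_mul_assoc, mul_smul_comm]
      exact (smul_sub c _ _).symm
    rw [key]
    exact ih c (ha l)

/-- The filtration step as a submodule. -/
noncomputable def filSub (n : ℕ) : Submodule K (Module.End K L) where
  carrier := diffOpFil K L n
  add_mem' := fil_add_mem K L n
  zero_mem' := fil_zero_mem K L n
  smul_mem' := fil_smul_mem K L n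

end Aux

section Aux2

variable (K L : Type*) [Field K] [Field L] [Algebra K L]

open LinearMap Polynomial

local notation "lm" => Algebra.lmul K L

lemma fil_mono : ∀ n, diffOpFil K L n ⊆ diffOpFil K L (n + 1) := by
  intro n
  induction n with
  | zero =>
    rintro _ ⟨x, rfl⟩ l
    rw [← map_mul, ← map_mul, mul_comm, sub_self]
    exact fil_zero_mem K L 0
  | succ n ih => intro δ hδ l; exact ih (hδ l)

/-- The commutator operator `δ ↦ δ * (y ·) - (y ·) * δ` as an endomorphism of `End_K(L)`. -/
noncomputable def adop (y : L) : Module.End K (Module.End K L) :=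
  LinearMap.mulRight K (Algebra.lmul K L y) - LinearMap.mulLeft K (Algebra.lmul K L y)

lemma adop_apply (y : L) (δ : Module.End K L) :
    adop K L y δ = δ * lm y - lm y * δ := by
  simp [adop, LinearMap.sub_apply, LinearMap.mulRight_apply, LinearMap.mulLeft_apply]

lemma commute_mulLeft_lm (y z : L) :
    Commute (LinearMap.mulLeft K (lm y) : Module.End K (Module.End K L))
      (LinearMap.mulLeft K (lm z)) := by
  have h : lm y * lm z = lm z * lm y := by rw [← map_mul, ← map_mul, mul_comm]
  ext δ
  simp only [Module.End.mul_apply, LinearMap.mulLeft_apply, ← mul_assoc, h]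

lemma commute_mulRight_lm (y z : L) :
    Commute (LinearMap.mulRight K (lm y) : Module.End K (Module.End K L))
      (LinearMap.mulRight K (lm z)) := by
  have h : lm y * lm z = lm z * lm y := by rw [← map_mul, ← map_mul, mul_comm]
  ext δ
  simp only [Module.End.mul_apply, LinearMap.mulRight_apply, mul_assoc, h]

lemma adop_commute (y z : L) : Commute (adop K L y) (adop K L z) := by
  unfold adop
  exact ((((commute_mulRight_lm K L y z)).sub_right
      (LinearMap.commute_mulLeft_right _ _).symm)).sub_left
    (((LinearMap.commute_mulLeft_right _ _)).sub_right (R := Module.End K (Module.End K L)) (commute_mulLeft_lm K L y z))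

end Aux2

section Aux3

variable (K L : Type*) [Field K] [Field L] [Algebra K L]

open LinearMap Polynomial

local notation "lm" => Algebra.lmul K L

lemma end_nontrivial (M : Type*) [AddCommMonoid M] [Module K M] [Nontrivial M] :
    Nontrivial (Module.End K M) := by
  obtain ⟨x, hx⟩ := exists_ne (0 : M)
  exact ⟨1, 0, fun h => hx (by simpa using LinearMap.ext_iff.mp h x)⟩

lemma adop_pow_eq_zero (p : ℕ) (hp : p.Prime) [CharP K p] (y : L) (c : K) (m : ℕ)
    (hy : y ^ p ^ m = algebraMap K L c) : (adop K L y) ^ (p ^ m) = 0 := by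
  haveI : Nontrivial (Module.End K L) := end_nontrivial K L
  haveI : Nontrivial (Module.End K (Module.End K L)) := end_nontrivial K (Module.End K L)
  haveI : CharP (Module.End K (Module.End K L)) p :=
    charP_of_injective_algebraMap' K p
  haveI : Fact p.Prime := ⟨hp⟩
  unfold adop
  rw [sub_pow_char_pow_of_commute (R := Module.End K (Module.End K L)) p m ((LinearMap.commute_mulLeft_right _ _).symm),
    LinearMap.pow_mulRight, LinearMap.pow_mulLeft, ← map_pow, hy]
  have h : lm (algebraMap K L c) = algebraMap K (Module.End K L) c :=
    (Algebra.lmul K L).commutes c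
  rw [h]
  ext δ
  simp [LinearMap.mulRight_apply, LinearMap.mulLeft_apply, Algebra.commutes]

lemma pigeon {N : ℕ} (hN : 0 < N) (b : Module.Basis (Fin N) K L) :
    ∀ (m : ℕ) (c : Fin N → ℕ), (∑ i, c i) = m → ∀ δ : Module.End K L,
      (∀ i, ((adop K L (b i)) ^ (c i)) δ = 0) → δ ∈ diffOpFil K L m := by
  intro m
  induction m with
  | zero =>
    intro c hc δ hδ
    have h0 : c ⟨0, hN⟩ = 0 := by
      have := Finset.sum_eq_zero_iff.mp hc ⟨0, hN⟩ (Finset.mem_univ _)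
      exact this
    have := hδ ⟨0, hN⟩
    rw [h0, pow_zero] at this
    have hδ0 : δ = 0 := this
    rw [hδ0]
    exact fil_zero_mem K L 0
  | succ m ih =>
    intro c hc δ hδ
    by_cases hex : ∃ j, c j = 0
    · obtain ⟨j, hj⟩ := hex
      have := hδ j
      rw [hj, pow_zero] at this
      have hδ0 : δ = 0 := this
      rw [hδ0]
      exact fil_zero_mem K L (m + 1)
    push_neg at hex
    -- the map l ↦ δ * lm l - lm l * δ, linear in l
    set φ : L →ₗ[K] Module.End K L :=
      (LinearMap.mulLeft K δ - LinearMap.mulRight K δ).comp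
        (Algebra.lmul K L).toLinearMap with hφdef
    have hφ : ∀ l : L, φ l = δ * lm l - lm l * δ := fun l => rfl
    have hbasis : ∀ j, φ (b j) ∈ filSub K L m := by
      intro j
      have hcj : 1 ≤ c j := Nat.one_le_iff_ne_zero.mpr (hex j)
      set c' : Fin N → ℕ := Function.update c j (c j - 1) with hc'
      have hsum : (∑ i, c' i) = m := by
        have h1 : (∑ i, c' i) = (c j - 1) + ∑ i ∈ Finset.univ \ {j}, c i := by
          rw [hc', Finset.sum_update_of_mem (Finset.mem_univ j)]
        have h2 : c j + ∑ i ∈ Finset.univ \ {j}, c i = m + 1 := by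
          rw [← Finset.erase_eq, Finset.add_sum_erase _ _ (Finset.mem_univ j), hc]
        omega
      refine ih c' hsum (φ (b j)) ?_
      intro i
      have hφbj : φ (b j) = adop K L (b j) δ := by rw [hφ, adop_apply]
      rcases eq_or_ne i j with rfl | hij
      · rw [hφbj, hc', Function.update_self, ← Module.End.mul_apply, ← pow_succ]
        have : c i - 1 + 1 = c i := Nat.succ_pred_eq_of_pos (hcj)
        rw [this]
        exact hδ i
      · rw [hφbj, hc', Function.update_of_ne hij, ← Module.End.mul_apply,
          ((adop_commute K L (b i) (b j)).pow_left (c i)).eq, Module.End.mul_apply,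
          hδ i, map_zero]
    intro l
    have hle : (⊤ : Submodule K L) ≤ (filSub K L m).comap φ := by
      rw [← b.span_eq]
      exact Submodule.span_le.mpr (by rintro _ ⟨j, rfl⟩; exact hbasis j)
    have : φ l ∈ filSub K L m := hle Submodule.mem_top
    rwa [hφ] at this

end Aux3

section Aux4

variable (K L : Type*) [Field K] [Field L] [Algebra K L]

open LinearMap Polynomial

local notation "lm" => Algebra.lmul K L

/-- Every differential operator commutes with multiplication by a separable element. -/
lemma commute_of_separable (x : L) (_hint : IsIntegral K x) (hsep : IsSeparable K x) :
    ∀ n, ∀ δ ∈ diffOpFil K L n, δ * lm x = lm x * δ := by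
  set u : Module.End K L := lm x with hu
  set f : K[X] := minpoly K x with hf
  obtain ⟨a, b, hab⟩ := hsep
  have hbf : aeval x b * aeval x (derivative f) = 1 := by
    have := congrArg (aeval x) hab
    simpa [minpoly.aeval] using this
  have haevalu : ∀ g : K[X], aeval u g = lm (aeval x g) := fun g =>
    Polynomial.aeval_algHom_apply (Algebra.lmul K L) x g
  intro n
  induction n with
  | zero =>
    rintro _ ⟨y, rfl⟩
    rw [← map_mul, ← map_mul, mul_comm]
  | succ n ih =>
    intro δ hδ
    set e : Module.End K L := δ * u - u * δ with he
    have heD : e ∈ diffOpFil K L n := hδ x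
    have hue : e * u = u * e := ih e heD
    have claim : ∀ g : K[X], δ * aeval u g - aeval u g * δ = aeval u (derivative g) * e := by
      intro g
      induction g using Polynomial.induction_on with
      | C c =>
        rw [derivative_C, map_zero, zero_mul, aeval_C, sub_eq_zero]
        exact (Algebra.commutes c δ).symm
      | add g h hg hh =>
        have expand : δ * (aeval u g + aeval u h) - (aeval u g + aeval u h) * δ
            = (δ * aeval u g - aeval u g * δ) + (δ * aeval u h - aeval u h * δ) := by
          noncomm_ring
        rw [derivative_add, map_add, map_add, expand, hg, hh, add_mul]
      | monomial k c hk =>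
        have hsplit : (C c * X ^ (k + 1) : K[X]) = (C c * X ^ k) * X := by ring
        set P : Module.End K L := aeval u (C c * X ^ k) with hP
        set Q : Module.End K L := aeval u (derivative (C c * X ^ k)) with hQ
        have hder : derivative (C c * X ^ (k + 1))
            = derivative (C c * X ^ k) * X + (C c * X ^ k) := by
          rw [hsplit, derivative_mul, derivative_X, mul_one]
        have haev : aeval u (C c * X ^ (k + 1)) = P * u := by
          rw [hsplit, map_mul, aeval_X, hP]
        rw [haev, hder, map_add, map_mul, aeval_X, add_mul, ← hQ, ← hP]
        have expand : δ * (P * u) - P * u * δ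
            = (δ * P - P * δ) * u + P * (δ * u - u * δ) := by
            simp only [sub_mul, mul_sub, mul_assoc]; abel
        rw [expand, hk, ← he, mul_assoc Q e u, hue, ← mul_assoc]
    have h0 : aeval u f = 0 := by rw [haevalu, hf, minpoly.aeval, map_zero]
    have hfe : lm (aeval x (derivative f)) * e = 0 := by
      have := claim f
      rw [h0, mul_zero, zero_mul, sub_zero, haevalu] at this
      -- this : 0 = lm (aeval x (derivative f)) * e
      exact this.symm
    have he0 : e = 0 := by
      have h1 : lm (aeval x b) * (lm (aeval x (derivative f)) * e) = 0 := by
        rw [hfe, mul_zero]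
      rwa [← mul_assoc, ← map_mul, hbf, map_one, one_mul] at h1
    have := sub_eq_zero.mp (he ▸ he0 : δ * u - u * δ = 0)
    exact this

end Aux4

/-- For a finite extension `L/K` in characteristic `p > 0`,
`D(L/K) = End_K(L)` if and only if `L/K` is purely inseparable. -/
theorem stmt13 (K L : Type*) [Field K] [Field L] [Algebra K L] [FiniteDimensional K L]
    (p : ℕ) (hp : p.Prime) [CharP K p] :
    diffOps K L = Set.univ ↔ IsPurelyInseparable K L := by
  constructor
  · intro h
    rw [isPurelyInseparable_iff]
    intro x
    refine ⟨Algebra.IsIntegral.isIntegral x, ?_⟩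
    intro hsep
    by_contra hx
    set p1 : Submodule K L := Submodule.span K {(1 : L)} with hp1
    have hx1 : x ∉ p1 := by
      intro hmem
      obtain ⟨c, hc⟩ := Submodule.mem_span_singleton.mp hmem
      exact hx ⟨c, by rw [Algebra.algebraMap_eq_smul_one]; exact hc⟩
    have hπx : (Submodule.Quotient.mk x : L ⧸ p1) ≠ 0 := by
      simpa [Submodule.Quotient.mk_eq_zero] using hx1
    obtain ⟨g, hg⟩ : ∃ g : Module.Dual K (L ⧸ p1), g (Submodule.Quotient.mk x) ≠ 0 := by
      by_contra hall
      push_neg at hall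
      exact hπx ((Module.forall_dual_apply_eq_zero_iff K _).mp hall)
    set g' : Module.Dual K (L ⧸ p1) := (g (Submodule.Quotient.mk x))⁻¹ • g with hg'
    set δ : Module.End K L := ((g'.comp p1.mkQ).smulRight (1 : L)) with hδ
    have hδx : δ x = 1 := by
      simp [hδ, hg', LinearMap.smulRight_apply, Submodule.mkQ_apply, smul_eq_mul,
        inv_mul_cancel₀ hg]
    have hδ1 : δ (1 : L) = 0 := by
      have h1p : (1 : L) ∈ p1 := Submodule.mem_span_singleton_self 1
      simp [hδ, hg', LinearMap.smulRight_apply, Submodule.mkQ_apply,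
        (Submodule.Quotient.mk_eq_zero p1).mpr h1p]
    have hδmem : δ ∈ diffOps K L := by rw [h]; trivial
    obtain ⟨s, hs⟩ := Set.mem_iUnion.mp hδmem
    have hcomm := commute_of_separable K L x (Algebra.IsIntegral.isIntegral x) hsep s δ hs
    have happ := congrArg (fun f : Module.End K L => f (1 : L)) hcomm
    simp only [Module.End.mul_apply] at happ
    have hlm1 : (Algebra.lmul K L x) (1 : L) = x := by simp [Algebra.lmul]
    rw [hlm1, hδx, hδ1, map_zero] at happ
    exact one_ne_zero happ
  · intro hins
    haveI : ExpChar K p := ExpChar.prime hp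
    have hN : 0 < Module.finrank K L := Module.finrank_pos
    set b := Module.finBasis K L with hb
    have hpow : ∀ i, ∃ m : ℕ, ∃ c : K, (b i) ^ p ^ m = algebraMap K L c := by
      intro i
      obtain ⟨m, hm⟩ := IsPurelyInseparable.pow_mem K p (b i)
      obtain ⟨c, hc⟩ := hm
      exact ⟨m, c, hc.symm⟩
    choose mfun cfun hcfun using hpow
    set E := Finset.univ.sup mfun with hE
    have huni : ∀ i, ∃ c : K, (b i) ^ p ^ E = algebraMap K L c := by
      intro i
      refine ⟨cfun i ^ p ^ (E - mfun i), ?_⟩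
      have hsplit : p ^ E = p ^ mfun i * p ^ (E - mfun i) := by
        rw [← pow_add, Nat.add_sub_cancel' (Finset.le_sup (Finset.mem_univ i))]
      rw [hsplit, pow_mul, hcfun i, ← map_pow]
    choose dfun hdfun using huni
    have hnil : ∀ i, (adop K L (b i)) ^ (p ^ E) = 0 := fun i =>
      adop_pow_eq_zero K L p hp (b i) (dfun i) E (hdfun i)
    ext δ
    simp only [Set.mem_univ, iff_true, diffOps, Set.mem_iUnion]
    refine ⟨Module.finrank K L * p ^ E, ?_⟩
    refine pigeon K L hN b _ (fun _ => p ^ E) ?_ δ ?_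
    · simp [Finset.sum_const, Finset.card_univ]
    · intro i
      rw [hnil i]
      rfl
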